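/- For n ≥ 2, a_k(n) = (1/2)(g_{k-1}(n) + g_k(n)), where g_k(n) is the number of permutations of {1,...,n} with exactly k alternating runs. -/

import Mathlib

/-- The list of values of a permutation of `Fin n` (0-indexed; relative order
is what matters). -/
def permList (n : ℕ) (w : Equiv.Perm (Fin n)) : List ℕ :=
  List.ofFn (fun i => (w i : ℕ))

/-- A list is alternating: `a > b < c > d < ⋯` (descents in even positions). -/
def IsAlt (l : List ℕ) : Prop :=
  ∀ i : ℕ, ∀ hi : i + 1 < l.length,
    if i % 2 = 0 then l.get ⟨i + 1, hi⟩ < l.get ⟨i, Nat.lt_of_succ_lt hi⟩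
    else l.get ⟨i, Nat.lt_of_succ_lt hi⟩ < l.get ⟨i + 1, hi⟩

/-- `asLen n w` : the maximum length of an alternating subsequence of `w`. -/
noncomputable def asLen (n : ℕ) (w : Equiv.Perm (Fin n)) : ℕ :=
  sSup {k | ∃ l : List ℕ, l.Sublist (permList n w) ∧ IsAlt l ∧ l.length = k}

/-- `aCount n k = #{w ∈ S_n : as(w) = k}`. -/
noncomputable def aCount (n k : ℕ) : ℕ :=
  Nat.card {w : Equiv.Perm (Fin n) // asLen n w = k}

/-- `bCount n k = #{w ∈ S_n : as(w) ≤ k}`. -/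
noncomputable def bCount (n k : ℕ) : ℕ :=
  Nat.card {w : Equiv.Perm (Fin n) // asLen n w ≤ k}

/-- The number of alternating runs (maximal monotone consecutive blocks) of `w`:
for `n ≥ 2` it is `1 +` the number of interior turning points. -/
def runCount (n : ℕ) (w : Equiv.Perm (Fin n)) : ℕ :=
  let l := permList n w
  if n ≤ 1 then n
  else 1 + ((Finset.range (n - 2)).filter (fun i =>
    (l[i]! < l[i+1]! ∧ l[i+2]! < l[i+1]!) ∨
    (l[i+1]! < l[i]! ∧ l[i+1]! < l[i+2]!))).card

/-- `gCount n k = #{w ∈ S_n : w has exactly k alternating runs}`. -/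
noncomputable def gCount (n k : ℕ) : ℕ :=
  Nat.card {w : Equiv.Perm (Fin n) // runCount n w = k}

/-! ### Auxiliary list-level theory -/

/-- A list is alternating starting with an ascent: `a < b > c < d > ⋯`. -/
def IsAltU (l : List ℕ) : Prop :=
  ∀ i : ℕ, ∀ hi : i + 1 < l.length,
    if i % 2 = 1 then l.get ⟨i + 1, hi⟩ < l.get ⟨i, Nat.lt_of_succ_lt hi⟩
    else l.get ⟨i, Nat.lt_of_succ_lt hi⟩ < l.get ⟨i + 1, hi⟩

lemma isAlt_singleton (a : ℕ) : IsAlt [a] := by intro i hi; simp at hi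

lemma isAltU_singleton (a : ℕ) : IsAltU [a] := by intro i hi; simp at hi

lemma isAlt_cons_iff {a : ℕ} {s : List ℕ} :
    IsAlt (a :: s) ↔ (IsAltU s ∧ ∀ x ∈ s.head?, x < a) := by
  constructor
  · intro h
    refine ⟨?_, ?_⟩
    · intro i hi
      have hi' : (i+1) + 1 < (a :: s).length := by simp; omega
      have := h (i+1) hi'
      rcases Nat.mod_two_eq_zero_or_one i with hp | hp <;>
        simp [hp, Nat.add_mod, List.get_eq_getElem] at this ⊢ <;> exact this
    · intro x hx
      cases s with
      | nil => simp at hx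
      | cons b t =>
        simp at hx
        subst hx
        have := h 0 (by simp)
        simpa using this
  · rintro ⟨hu, hh⟩ i hi
    cases i with
    | zero =>
      cases s with
      | nil => simp at hi
      | cons b t =>
        have := hh b (by simp)
        simpa using this
    | succ j =>
      have hj : j + 1 < s.length := by simp at hi; omega
      have := hu j hj
      rcases Nat.mod_two_eq_zero_or_one j with hp | hp <;>
        simp [hp, Nat.add_mod, List.get_eq_getElem] at this ⊢ <;> exact this

lemma isAltU_cons_iff {a : ℕ} {s : List ℕ} :
    IsAltU (a :: s) ↔ (IsAlt s ∧ ∀ x ∈ s.head?, a < x) := by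
  constructor
  · intro h
    refine ⟨?_, ?_⟩
    · intro i hi
      have hi' : (i+1) + 1 < (a :: s).length := by simp; omega
      have := h (i+1) hi'
      rcases Nat.mod_two_eq_zero_or_one i with hp | hp <;>
        simp [hp, Nat.add_mod, List.get_eq_getElem] at this ⊢ <;> exact this
    · intro x hx
      cases s with
      | nil => simp at hx
      | cons b t =>
        simp at hx
        subst hx
        have := h 0 (by simp)
        simpa using this
  · rintro ⟨hu, hh⟩ i hi
    cases i with
    | zero =>
      cases s with
      | nil => simp at hi
      | cons b t =>
        have := hh b (by simp)
        simpa using this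
    | succ j =>
      have hj : j + 1 < s.length := by simp at hi; omega
      have := hu j hj
      rcases Nat.mod_two_eq_zero_or_one j with hp | hp <;>
        simp [hp, Nat.add_mod, List.get_eq_getElem] at this ⊢ <;> exact this

-- `Dlen`/`Ulen`: length of the longest descent-first/ascent-first alternating subsequence.
mutual
def Dlen : List ℕ → ℕ
  | [] => 0
  | [_] => 1
  | a :: b :: t => if b < a then 1 + Ulen (b :: t) else Dlen (b :: t)
def Ulen : List ℕ → ℕ
  | [] => 0
  | [_] => 1
  | a :: b :: t => if a < b then 1 + Dlen (b :: t) else Ulen (b :: t)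
end

lemma Dlen_nil : Dlen [] = 0 := by rw [Dlen]
lemma Ulen_nil : Ulen [] = 0 := by rw [Ulen]
lemma Dlen_single (a : ℕ) : Dlen [a] = 1 := by rw [Dlen]
lemma Ulen_single (a : ℕ) : Ulen [a] = 1 := by rw [Ulen]
lemma Dlen_cons (a b : ℕ) (t : List ℕ) :
    Dlen (a :: b :: t) = if b < a then 1 + Ulen (b :: t) else Dlen (b :: t) := by rw [Dlen]
lemma Ulen_cons (a b : ℕ) (t : List ℕ) :
    Ulen (a :: b :: t) = if a < b then 1 + Dlen (b :: t) else Ulen (b :: t) := by rw [Ulen]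

lemma dlen_pos : ∀ {l : List ℕ}, l ≠ [] → 1 ≤ Dlen l
  | [], h => absurd rfl h
  | [a], _ => le_refl 1
  | a :: b :: t, _ => by
    rw [Dlen]
    split
    · omega
    · exact dlen_pos (by simp)

lemma ulen_pos : ∀ {l : List ℕ}, l ≠ [] → 1 ≤ Ulen l
  | [], h => absurd rfl h
  | [a], _ => le_refl 1
  | a :: b :: t, _ => by
    rw [Ulen]
    split
    · omega
    · exact ulen_pos (by simp)

lemma dlen_le_ulen_succ : ∀ (l : List ℕ), Dlen l ≤ Ulen l + 1
  | [] => by simp [Dlen, Ulen]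
  | [a] => by simp [Dlen, Ulen]
  | a :: b :: t => by
    rw [Dlen, Ulen]
    by_cases h : b < a
    · have h' : ¬ a < b := by omega
      simp [h, h']; omega
    · by_cases h' : a < b <;> simp [h, h'] <;>
      · have := dlen_le_ulen_succ (b :: t); omega

lemma ulen_le_dlen_succ : ∀ (l : List ℕ), Ulen l ≤ Dlen l + 1
  | [] => by simp [Dlen, Ulen]
  | [a] => by simp [Dlen, Ulen]
  | a :: b :: t => by
    rw [Dlen, Ulen]
    by_cases h : a < b
    · have h' : ¬ b < a := by omega
      simp [h, h']; omega
    · by_cases h' : b < a <;> simp [h, h'] <;>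
      · have := ulen_le_dlen_succ (b :: t); omega

lemma dlen_cons_le (a : ℕ) : ∀ (t : List ℕ), Dlen t ≤ Dlen (a :: t)
  | [] => by simp [Dlen]
  | b :: t => by
    show Dlen (b :: t) ≤ Dlen (a :: b :: t)
    rw [Dlen]
    split
    · have := dlen_le_ulen_succ (b :: t); omega
    · exact le_refl _

lemma ulen_cons_le (a : ℕ) : ∀ (t : List ℕ), Ulen t ≤ Ulen (a :: t)
  | [] => by simp [Ulen]
  | b :: t => by
    show Ulen (b :: t) ≤ Ulen (a :: b :: t)
    rw [Ulen]
    split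
    · have := ulen_le_dlen_succ (b :: t); omega
    · exact le_refl _

/-- Upper bounds: any alternating sublist is no longer than `Dlen`/`Ulen`. -/
theorem UB_all : ∀ (l : List ℕ), List.Chain' (· ≠ ·) l →
    (∀ s, s.Sublist l → IsAlt s → s.length ≤ Dlen l) ∧
    (∀ s, s.Sublist l → IsAltU s → s.length ≤ Ulen l) ∧
    (∀ s, s.Sublist l → IsAlt s → (∀ x ∈ s.head?, ∀ y ∈ l.head?, y < x) →
      s.length ≤ Ulen l - 1) ∧
    (∀ s, s.Sublist l → IsAltU s → (∀ x ∈ s.head?, ∀ y ∈ l.head?, x < y) →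
      s.length ≤ Dlen l - 1) := by
  intro l
  induction l with
  | nil =>
    intro _
    refine ⟨?_, ?_, ?_, ?_⟩ <;>
    · intro s hs
      rw [List.sublist_nil.mp hs]
      intros; simp
  | cons a t ih =>
    intro hc
    obtain ⟨P, Q, P', Q'⟩ := ih hc.tail
    refine ⟨?_, ?_, ?_, ?_⟩
    · -- P for a :: t
      intro s hs halt
      cases hs with
      | cons _ h => exact (P s h halt).trans (dlen_cons_le a t)
      | cons_cons _ h =>
        rename_i r
        obtain ⟨hu, hh⟩ := isAlt_cons_iff.mp halt
        cases r with
        | nil => simpa using dlen_pos (l := a :: t) (by simp)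
        | cons x r' =>
          cases t with
          | nil => exact absurd (List.sublist_nil.mp h) (by simp)
          | cons b t' =>
            rw [Dlen_cons]
            by_cases hba : b < a
            · rw [if_pos hba]
              have := Q (x :: r') h hu
              simp only [List.length_cons] at *
              omega
            · have hab : a < b := by
                have : a ≠ b := (List.isChain_cons_cons.mp hc).1
                omega
              rw [if_neg hba]
              have h1 := Q' (x :: r') h hu (by
                intro u hu' v hv'
                simp at hu' hv'
                subst hu'; subst hv'
                have := hh x (by simp)
                omega)
              have h2 : 1 ≤ Dlen (b :: t') := dlen_pos (by simp)
              simp only [List.length_cons] at *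
              omega
    · -- Q for a :: t
      intro s hs halt
      cases hs with
      | cons _ h => exact (Q s h halt).trans (ulen_cons_le a t)
      | cons_cons _ h =>
        rename_i r
        obtain ⟨hu, hh⟩ := isAltU_cons_iff.mp halt
        cases r with
        | nil => simpa using ulen_pos (l := a :: t) (by simp)
        | cons x r' =>
          cases t with
          | nil => exact absurd (List.sublist_nil.mp h) (by simp)
          | cons b t' =>
            rw [Ulen_cons]
            by_cases hab : a < b
            · rw [if_pos hab]
              have := P (x :: r') h hu
              simp only [List.length_cons] at *
              omega
            · have hba : b < a := by
                have : a ≠ b := (List.isChain_cons_cons.mp hc).1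
                omega
              rw [if_neg hab]
              have h1 := P' (x :: r') h hu (by
                intro u hu' v hv'
                simp at hu' hv'
                subst hu'; subst hv'
                have := hh x (by simp)
                omega)
              have h2 : 1 ≤ Ulen (b :: t') := ulen_pos (by simp)
              simp only [List.length_cons] at *
              omega
    · -- P' for a :: t
      intro s hs halt hhead
      cases hs with
      | cons _ h =>
        cases s with
        | nil => simp
        | cons x s0 =>
          cases t with
          | nil => exact absurd (List.sublist_nil.mp h) (by simp)
          | cons b t' =>
            have hax : a < x := by
              have := hhead x (by simp) a (by simp)
              omega
            rw [Ulen_cons]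
            by_cases hab : a < b
            · rw [if_pos hab]
              have := P (x :: s0) h halt
              simp only [List.length_cons] at *
              omega
            · have hba : b < a := by
                have : a ≠ b := (List.isChain_cons_cons.mp hc).1
                omega
              rw [if_neg hab]
              exact P' (x :: s0) h halt (by
                intro u hu' v hv'
                simp at hu' hv'
                subst hu'; subst hv'
                omega)
      | cons_cons _ h =>
        have := hhead a (by simp) a (by simp)
        omega
    · -- Q' for a :: t
      intro s hs halt hhead
      cases hs with
      | cons _ h =>
        cases s with
        | nil => simp
        | cons x s0 =>
          cases t with
          | nil => exact absurd (List.sublist_nil.mp h) (by simp)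
          | cons b t' =>
            have hax : x < a := by
              have := hhead x (by simp) a (by simp)
              omega
            rw [Dlen_cons]
            by_cases hba : b < a
            · rw [if_pos hba]
              have := Q (x :: s0) h halt
              simp only [List.length_cons] at *
              omega
            · have hab : a < b := by
                have : a ≠ b := (List.isChain_cons_cons.mp hc).1
                omega
              rw [if_neg hba]
              exact Q' (x :: s0) h halt (by
                intro u hu' v hv'
                simp at hu' hv'
                subst hu'; subst hv'
                omega)
      | cons_cons _ h =>
        have := hhead a (by simp) a (by simp)
        omega

/-- Lower bounds: alternating sublists of lengths `Dlen`/`Ulen` exist. -/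
theorem LB_all : ∀ (l : List ℕ), List.Chain' (· ≠ ·) l → l ≠ [] →
    (∃ s, s.Sublist l ∧ IsAlt s ∧ s.length = Dlen l ∧
      ∃ x ∈ s.head?, ∃ y ∈ l.head?, y ≤ x) ∧
    (∃ s, s.Sublist l ∧ IsAltU s ∧ s.length = Ulen l ∧
      ∃ x ∈ s.head?, ∃ y ∈ l.head?, x ≤ y) := by
  intro l
  induction l with
  | nil => intro _ h; exact absurd rfl h
  | cons a t ih =>
    intro hc _
    constructor
    · -- D part
      cases t with
      | nil =>
        exact ⟨[a], by simp, isAlt_singleton a, by simp [Dlen_single], by simp⟩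
      | cons b t' =>
        by_cases hba : b < a
        · obtain ⟨_, s', hs', hu', hlen', x₀, hx₀, y₀, hy₀, hxy⟩ :=
            (ih hc.tail (by simp)).imp id id
          refine ⟨a :: s', hs'.cons₂ a, ?_, ?_, ?_⟩
          · refine isAlt_cons_iff.mpr ⟨hu', ?_⟩
            intro x hx
            have : x = x₀ := by
              rw [hx₀] at hx; exact (Option.some_inj.mp hx.symm ▸ rfl)
            simp at hy₀
            omega
          · rw [Dlen_cons, if_pos hba]
            simp [hlen']; omega
          · exact ⟨a, by simp, a, by simp, le_refl a⟩
        · have hab : a < b := by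
            have : a ≠ b := (List.isChain_cons_cons.mp hc).1
            omega
          obtain ⟨s, hs, halt, hlen, x₀, hx₀, y₀, hy₀, hxy⟩ := (ih hc.tail (by simp)).1
          refine ⟨s, hs.cons a, halt, ?_, ?_⟩
          · rw [Dlen_cons, if_neg hba]; exact hlen
          · refine ⟨x₀, hx₀, a, by simp, ?_⟩
            simp at hy₀
            omega
    · -- U part
      cases t with
      | nil =>
        exact ⟨[a], by simp, isAltU_singleton a, by simp [Ulen_single], by simp⟩
      | cons b t' =>
        by_cases hab : a < b
        · obtain ⟨s', hs', hd', hlen', x₀, hx₀, y₀, hy₀, hxy⟩ := (ih hc.tail (by simp)).1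
          refine ⟨a :: s', hs'.cons₂ a, ?_, ?_, ?_⟩
          · refine isAltU_cons_iff.mpr ⟨hd', ?_⟩
            intro x hx
            have : x = x₀ := by
              rw [hx₀] at hx; exact (Option.some_inj.mp hx.symm ▸ rfl)
            simp at hy₀
            omega
          · rw [Ulen_cons, if_pos hab]
            simp [hlen']; omega
          · exact ⟨a, by simp, a, by simp, le_refl a⟩
        · have hba : b < a := by
            have : a ≠ b := (List.isChain_cons_cons.mp hc).1
            omega
          obtain ⟨s, hs, halt, hlen, x₀, hx₀, y₀, hy₀, hxy⟩ := (ih hc.tail (by simp)).2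
          refine ⟨s, hs.cons a, halt, ?_, ?_⟩
          · rw [Ulen_cons, if_neg hab]; exact hlen
          · refine ⟨x₀, hx₀, a, by simp, ?_⟩
            simp at hy₀
            omega

/-- The run-count formula equals `min (Dlen l) (Ulen l)`. -/
theorem runs_card : ∀ (l : List ℕ), List.Chain' (· ≠ ·) l → 2 ≤ l.length →
    1 + ((Finset.range (l.length - 2)).filter (fun i =>
      (l[i]! < l[i+1]! ∧ l[i+2]! < l[i+1]!) ∨
      (l[i+1]! < l[i]! ∧ l[i+1]! < l[i+2]!))).card = min (Dlen l) (Ulen l)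
  | [], _, h2 => by simp at h2
  | [a], _, h2 => by simp at h2
  | [a, b], hc, _ => by
    have hab : a ≠ b := (List.isChain_cons_cons.mp hc).1
    have hD : Dlen [a, b] = if b < a then 1 + 1 else 1 := by
      rw [Dlen_cons, Ulen_single, Dlen_single]
    have hU : Ulen [a, b] = if a < b then 1 + 1 else 1 := by
      rw [Ulen_cons, Ulen_single, Dlen_single]
    simp only [List.length_cons, List.length_nil]
    norm_num
    rcases Nat.lt_or_ge a b with h | h
    · rw [if_neg (by omega)] at hD
      rw [if_pos h] at hU
      omega
    · have h' : b < a := by omega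
      rw [if_pos h'] at hD
      rw [if_neg (by omega)] at hU
      omega
  | a :: b :: c :: t, hc, _ => by
    have IH := runs_card (b :: c :: t) hc.tail (by simp)
    have hab : a ≠ b := (List.isChain_cons_cons.mp hc).1
    have hbc : b ≠ c := (List.isChain_cons_cons.mp hc.tail).1
    have hlen : (a :: b :: c :: t : List ℕ).length - 2
        = ((b :: c :: t : List ℕ).length - 2) + 1 := by simp
    rw [hlen]
    rw [Finset.card_filter] at IH ⊢
    rw [Finset.sum_range_succ']
    simp only [List.getElem!_cons_succ, List.getElem!_cons_zero] at *
    have hD1 := Dlen_cons b c t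
    have hU1 := Ulen_cons b c t
    have hD := Dlen_cons a b (c :: t)
    have hU := Ulen_cons a b (c :: t)
    rcases Nat.lt_or_ge a b with h1 | h1
    · rw [if_neg (by omega)] at hD
      rw [if_pos h1] at hU
      rcases Nat.lt_or_ge b c with h2 | h2
      · rw [if_neg (by omega)] at hD1
        rw [if_pos h2] at hU1
        rw [if_neg (by omega)]
        omega
      · have h2' : c < b := by omega
        rw [if_pos h2'] at hD1
        rw [if_neg (by omega)] at hU1
        rw [if_pos (by omega)]
        omega
    · have h1' : b < a := by omega
      rw [if_pos h1'] at hD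
      rw [if_neg (by omega)] at hU
      rcases Nat.lt_or_ge b c with h2 | h2
      · rw [if_neg (by omega)] at hD1
        rw [if_pos h2] at hU1
        rw [if_pos (by omega)]
        omega
      · have h2' : c < b := by omega
        rw [if_pos h2'] at hD1
        rw [if_neg (by omega)] at hU1
        rw [if_neg (by omega)]
        omega

/-- Complementation swaps `Dlen` and `Ulen`. -/
theorem dlen_ulen_map (N : ℕ) : ∀ (l : List ℕ), (∀ x ∈ l, x < N) →
    Dlen (l.map (fun x => N - 1 - x)) = Ulen l ∧
    Ulen (l.map (fun x => N - 1 - x)) = Dlen l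
  | [], _ => by simp [Dlen_nil, Ulen_nil]
  | [a], _ => by simp [Dlen_single, Ulen_single]
  | a :: b :: t, h => by
    have IH := dlen_ulen_map N (b :: t) (fun x hx => h x (List.mem_cons_of_mem a hx))
    have ha : a < N := h a (by simp)
    have hb : b < N := h b (by simp)
    simp only [List.map_cons] at IH ⊢
    constructor
    · rw [Dlen_cons (N-1-a) (N-1-b) (t.map (fun x => N - 1 - x)), Ulen_cons a b t]
      by_cases hab : a < b
      · rw [if_pos (by omega), if_pos hab, IH.2]
      · rw [if_neg (by omega), if_neg hab, IH.1]
    · rw [Ulen_cons (N-1-a) (N-1-b) (t.map (fun x => N - 1 - x)), Dlen_cons a b t]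
      by_cases hba : b < a
      · rw [if_pos (by omega), if_pos hba, IH.1]
      · rw [if_neg (by omega), if_neg hba, IH.2]

/-! ### Permutation-level lemmas -/

lemma permList_length (n : ℕ) (w : Equiv.Perm (Fin n)) : (permList n w).length = n := by
  simp [permList]

lemma permList_chain' (n : ℕ) (w : Equiv.Perm (Fin n)) :
    List.Chain' (· ≠ ·) (permList n w) := by
  apply List.Pairwise.isChain
  have : (permList n w).Nodup := by
    rw [permList, List.nodup_ofFn]
    exact Fin.val_injective.comp w.injective
  exact this

lemma permList_lt (n : ℕ) (w : Equiv.Perm (Fin n)) : ∀ x ∈ permList n w, x < n := by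
  intro x hx
  rw [permList, List.mem_ofFn] at hx
  obtain ⟨i, rfl⟩ := hx
  exact (w i).isLt

lemma asLen_eq (n : ℕ) (w : Equiv.Perm (Fin n)) (hn : 2 ≤ n) :
    asLen n w = Dlen (permList n w) := by
  apply IsGreatest.csSup_eq
  constructor
  · obtain ⟨⟨s, h1, h2, h3, _⟩, -⟩ := LB_all (permList n w) (permList_chain' n w)
      (by rw [← List.length_pos_iff, permList_length]; omega)
    exact ⟨s, h1, h2, h3⟩
  · rintro x ⟨s, h1, h2, rfl⟩
    exact (UB_all (permList n w) (permList_chain' n w)).1 s h1 h2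

lemma runCount_eq (n : ℕ) (w : Equiv.Perm (Fin n)) (hn : 2 ≤ n) :
    runCount n w = min (Dlen (permList n w)) (Ulen (permList n w)) := by
  have h := runs_card (permList n w) (permList_chain' n w)
    (by rw [permList_length]; omega)
  rw [permList_length] at h
  rw [runCount]
  rw [if_neg (by omega)]
  exact h

/-- The complementation bijection. -/
noncomputable def phi (n : ℕ) (w : Equiv.Perm (Fin n)) : Equiv.Perm (Fin n) :=
  w.trans (Fin.revPerm)

lemma phi_phi (n : ℕ) (w : Equiv.Perm (Fin n)) : phi n (phi n w) = w := by
  ext i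
  simp [phi, Fin.rev_rev]

lemma permList_phi (n : ℕ) (w : Equiv.Perm (Fin n)) :
    permList n (phi n w) = (permList n w).map (fun x => n - 1 - x) := by
  rw [permList, permList, List.map_ofFn]
  congr 1
  funext i
  simp [phi, Fin.val_rev, Function.comp]
  omega

/-- First step of `w` is an ascent. -/
def UpW (n : ℕ) (w : Equiv.Perm (Fin n)) : Prop :=
  (permList n w)[0]! < (permList n w)[1]!

lemma exists_cons2 (n : ℕ) (hn : 2 ≤ n) (w : Equiv.Perm (Fin n)) :
    ∃ a b t, permList n w = a :: b :: t := by
  have h := permList_length n w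
  match hl : permList n w with
  | [] => rw [hl] at h; simp at h; omega
  | [a] => rw [hl] at h; simp at h; omega
  | a :: b :: t => exact ⟨a, b, t, rfl⟩

lemma key_up (n : ℕ) (hn : 2 ≤ n) (w : Equiv.Perm (Fin n)) (h : UpW n w) :
    asLen n w = runCount n w := by
  obtain ⟨a, b, t, hl⟩ := exists_cons2 n hn w
  have hab : a < b := by
    rw [UpW, hl] at h
    simpa using h
  have hD := Dlen_cons a b t
  have hU := Ulen_cons a b t
  rw [if_neg (by omega)] at hD
  rw [if_pos hab] at hU
  rw [asLen_eq n w hn, runCount_eq n w hn, hl, hD, hU]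
  omega

lemma key_down (n : ℕ) (hn : 2 ≤ n) (w : Equiv.Perm (Fin n)) (h : ¬ UpW n w) :
    asLen n w = runCount n w + 1 := by
  obtain ⟨a, b, t, hl⟩ := exists_cons2 n hn w
  have hne : a ≠ b := by
    have hc := permList_chain' n w
    rw [hl] at hc
    exact (List.isChain_cons_cons.mp hc).1
  have hab : b < a := by
    rw [UpW, hl] at h
    simp at h
    omega
  have hD := Dlen_cons a b t
  have hU := Ulen_cons a b t
  rw [if_pos hab] at hD
  rw [if_neg (by omega)] at hU
  rw [asLen_eq n w hn, runCount_eq n w hn, hl, hD, hU]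
  omega

lemma key_phi_run (n : ℕ) (hn : 2 ≤ n) (w : Equiv.Perm (Fin n)) :
    runCount n (phi n w) = runCount n w := by
  rw [runCount_eq n _ hn, runCount_eq n w hn, permList_phi]
  obtain ⟨h1, h2⟩ := dlen_ulen_map n (permList n w) (permList_lt n w)
  rw [h1, h2, Nat.min_comm]

lemma key_phi_up (n : ℕ) (hn : 2 ≤ n) (w : Equiv.Perm (Fin n)) :
    UpW n (phi n w) ↔ ¬ UpW n w := by
  obtain ⟨a, b, t, hl⟩ := exists_cons2 n hn w
  have hne : a ≠ b := by
    have hc := permList_chain' n w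
    rw [hl] at hc
    exact (List.isChain_cons_cons.mp hc).1
  have ha : a < n := permList_lt n w a (by rw [hl]; simp)
  have hb : b < n := permList_lt n w b (by rw [hl]; simp)
  rw [UpW, UpW, permList_phi, hl]
  simp only [List.map_cons, List.getElem!_cons_zero, List.getElem!_cons_succ]
  omega

theorem aCount_eq_half_sum_gCount (n k : ℕ) (hn : 2 ≤ n) (hk : 1 ≤ k) :
    2 * aCount n k = gCount n (k - 1) + gCount n k := by
  classical
  have hcard : ∀ (p : Equiv.Perm (Fin n) → Prop),
      Nat.card {w : Equiv.Perm (Fin n) // p w} = (Finset.univ.filter p).card := by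
    intro p
    rw [Nat.card_eq_fintype_card, Fintype.card_subtype]
  have hsplit : ∀ j : ℕ,
      (Finset.univ.filter (fun w : Equiv.Perm (Fin n) => runCount n w = j)).card
      = (Finset.univ.filter (fun w : Equiv.Perm (Fin n) => runCount n w = j ∧ UpW n w)).card
        + (Finset.univ.filter (fun w : Equiv.Perm (Fin n) => runCount n w = j ∧ ¬ UpW n w)).card := by
    intro j
    rw [← Finset.filter_filter, ← Finset.filter_filter,
      Finset.card_filter_add_card_filter_not (p := fun w => UpW n w)]
  have hbij : ∀ j : ℕ,
      (Finset.univ.filter (fun w : Equiv.Perm (Fin n) => runCount n w = j ∧ UpW n w)).card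
      = (Finset.univ.filter (fun w : Equiv.Perm (Fin n) => runCount n w = j ∧ ¬ UpW n w)).card := by
    intro j
    apply Finset.card_bij' (fun w _ => phi n w) (fun w _ => phi n w)
    · intro w hw
      simp only [Finset.mem_filter, Finset.mem_univ, true_and] at hw ⊢
      exact ⟨by rw [key_phi_run n hn]; exact hw.1,
        by rw [key_phi_up n hn]; exact fun h' => h' hw.2⟩
    · intro w hw
      simp only [Finset.mem_filter, Finset.mem_univ, true_and] at hw ⊢
      exact ⟨by rw [key_phi_run n hn]; exact hw.1,
        (key_phi_up n hn w).mpr hw.2⟩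
    · intro w _; exact phi_phi n w
    · intro w _; exact phi_phi n w
  have hdisj : Disjoint
      (Finset.univ.filter (fun w : Equiv.Perm (Fin n) => runCount n w = k ∧ UpW n w))
      (Finset.univ.filter (fun w : Equiv.Perm (Fin n) => runCount n w = k - 1 ∧ ¬ UpW n w)) := by
    rw [Finset.disjoint_left]
    intro w hw1 hw2
    simp only [Finset.mem_filter] at hw1 hw2
    exact hw2.2.2 hw1.2.2
  have hmain :
      (Finset.univ.filter (fun w : Equiv.Perm (Fin n) => asLen n w = k)).card
      = (Finset.univ.filter (fun w : Equiv.Perm (Fin n) => runCount n w = k ∧ UpW n w)).card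
        + (Finset.univ.filter (fun w : Equiv.Perm (Fin n) => runCount n w = k - 1 ∧ ¬ UpW n w)).card := by
    rw [← Finset.card_union_of_disjoint hdisj, ← Finset.filter_or]
    congr 1
    apply Finset.filter_congr
    intro w _
    constructor
    · intro hw
      by_cases hu : UpW n w
      · exact Or.inl ⟨by rw [← key_up n hn w hu]; exact hw, hu⟩
      · refine Or.inr ⟨?_, hu⟩
        have := key_down n hn w hu
        omega
    · rintro (⟨h1, h2⟩ | ⟨h1, h2⟩)
      · rw [key_up n hn w h2]; exact h1
      · rw [key_down n hn w h2]; omega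
  have e1 : aCount n k
      = (Finset.univ.filter (fun w : Equiv.Perm (Fin n) => asLen n w = k)).card := by
    unfold aCount; rw [hcard]; congr
  have e2 : gCount n k
      = (Finset.univ.filter (fun w : Equiv.Perm (Fin n) => runCount n w = k)).card := by
    unfold gCount; rw [hcard]; congr
  have e3 : gCount n (k-1)
      = (Finset.univ.filter (fun w : Equiv.Perm (Fin n) => runCount n w = k - 1)).card := by
    unfold gCount; rw [hcard]; congr
  rw [e1, e2, e3, hmain, hsplit k, hsplit (k-1), hbij k, hbij (k-1)]
  ring
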